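/- Let P be a projective plane of order n ≥ 5 and A, B, C three non-collinear points. In the structure obtained by deleting all points on lines AB, AC, BC and all lines through A, B, C, any two remaining points P, Q that are collinear (in the remaining structure) have exactly (n-4)² + 1 remaining points collinear with both. -/

import Mathlib

lemma card_four {α : Type*} [DecidableEq α] {a b c d : α}
    (hab : a ≠ b) (hac : a ≠ c) (had : a ≠ d)
    (hbc : b ≠ c) (hbd : b ≠ d) (hcd : c ≠ d) :
    ({a, b, c, d} : Finset α).card = 4 := by
  rw [Finset.card_insert_of_notMem (by simp [hab, hac, had]),
      Finset.card_insert_of_notMem (by simp [hbc, hbd]),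
      Finset.card_insert_of_notMem (by simp [hcd]),
      Finset.card_singleton]

lemma card_five {α : Type*} [DecidableEq α] {a b c d e : α}
    (hab : a ≠ b) (hac : a ≠ c) (had : a ≠ d) (hae : a ≠ e)
    (hbc : b ≠ c) (hbd : b ≠ d) (hbe : b ≠ e)
    (hcd : c ≠ d) (hce : c ≠ e) (hde : d ≠ e) :
    ({a, b, c, d, e} : Finset α).card = 5 := by
  rw [Finset.card_insert_of_notMem (by simp [hab, hac, had, hae]),
      Finset.card_insert_of_notMem (by simp [hbc, hbd, hbe]),
      Finset.card_insert_of_notMem (by simp [hcd, hce]),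
      Finset.card_insert_of_notMem (by simp [hde]),
      Finset.card_singleton]

lemma badline_count {Pt Ln : Type*} [Fintype Pt] [Fintype Ln] [DecidableEq Pt]
    (Inc : Pt → Ln → Prop) [∀ p l, Decidable (Inc p l)] (n : ℕ) (hn : 5 ≤ n)
    (key : ∀ (p q : Pt) (l m : Ln), Inc p l → Inc p m → Inc q l → Inc q m → p = q ∨ l = m)
    (hjoin : ∀ p q : Pt, p ≠ q → ∃ l, Inc p l ∧ Inc q l)
    (hmeet : ∀ l m : Ln, l ≠ m → ∃ p, Inc p l ∧ Inc p m)
    (hldeg : ∀ l : Ln, (Finset.univ.filter (fun p : Pt => Inc p l)).card = n + 1)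
    (R : Pt → Prop) [DecidablePred R] (LR : Ln → Prop) [DecidablePred LR]
    (A B C : Pt) (a b c : Ln)
    (hBa : Inc B a) (hCa : Inc C a) (hAb : Inc A b) (hCb : Inc C b)
    (hAc : Inc A c) (hBc : Inc B c)
    (hR : ∀ z, R z ↔ (¬Inc z a ∧ ¬Inc z b ∧ ¬Inc z c))
    (hLR : ∀ l, LR l ↔ (¬Inc A l ∧ ¬Inc B l ∧ ¬Inc C l))
    (hAa : ¬ Inc A a) (hBb : ¬ Inc B b) (hCc : ¬ Inc C c)
    (P Q : Pt) (hPQ : P ≠ Q) (hRP : R P) (hRQ : R Q)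
    (L : Ln) (hLRl : LR L) (hPl : Inc P L) (hQl : Inc Q L)
    (qa : Ln) (hQqa : Inc Q qa) (hAqa : Inc A qa) :
    (Finset.univ.filter (fun z : Pt => Inc z qa ∧ R z ∧ z ≠ P ∧ z ≠ Q ∧
        (∃ l : Ln, LR l ∧ Inc P l ∧ Inc z l))).card = n - 4 := by
  classical
  obtain ⟨hPa, hPb, hPc⟩ := (hR P).1 hRP
  obtain ⟨hQa, hQb, hQc⟩ := (hR Q).1 hRQ
  obtain ⟨hAL, hBL, hCL⟩ := (hLR L).1 hLRl
  -- basic distinctness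
  have hAB : A ≠ B := fun h => hBb (h ▸ hAb)
  have hAC : A ≠ C := fun h => hCc (h ▸ hAc)
  have hBC : B ≠ C := fun h => hCc (h ▸ hBc)
  have hPA : P ≠ A := fun h => hPb (h ▸ hAb)
  have hPB : P ≠ B := fun h => hPa (h ▸ hBa)
  have hPC : P ≠ C := fun h => hPa (h ▸ hCa)
  have hQA : Q ≠ A := fun h => hQb (h ▸ hAb)
  -- qa is not L, not a, b, c
  have hqaL : qa ≠ L := fun h => hAL (h ▸ hAqa)
  have hPqa : ¬ Inc P qa := by
    intro h
    rcases key P Q qa L h hPl hQqa hQl with h1 | h1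
    · exact hPQ h1
    · exact hqaL h1
  have hqa_a : qa ≠ a := fun h => hAa (h ▸ hAqa)
  -- lines PB and PC
  obtain ⟨pb, hPpb, hBpb⟩ := hjoin P B hPB
  obtain ⟨pc, hPpc, hCpc⟩ := hjoin P C hPC
  have hpb_qa : pb ≠ qa := fun h => hPqa (h ▸ hPpb)
  have hpc_qa : pc ≠ qa := fun h => hPqa (h ▸ hPpc)
  have hApb : ¬ Inc A pb := by
    intro h
    rcases key A B pb c h hAc hBpb hBc with h1 | h1
    · exact hAB h1
    · exact hPc (h1 ▸ hPpb)
  have hApc : ¬ Inc A pc := by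
    intro h
    rcases key A C pc b h hAb hCpc hCb with h1 | h1
    · exact hAC h1
    · exact hPb (h1 ▸ hPpc)
  have hQpb : ¬ Inc Q pb := by
    intro h
    rcases key P Q pb L hPpb hPl h hQl with h1 | h1
    · exact hPQ h1
    · exact hBL (h1 ▸ hBpb)
  have hQpc : ¬ Inc Q pc := by
    intro h
    rcases key P Q pc L hPpc hPl h hQl with h1 | h1
    · exact hPQ h1
    · exact hCL (h1 ▸ hCpc)
  -- the three meet points
  obtain ⟨X, hXqa, hXa⟩ := hmeet qa a hqa_a
  obtain ⟨Y, hYqa, hYpb⟩ := hmeet qa pb (Ne.symm hpb_qa)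
  obtain ⟨Y', hY'qa, hY'pc⟩ := hmeet qa pc (Ne.symm hpc_qa)
  have hBqa : ¬ Inc B qa := by
    intro h
    rcases key A B qa c hAqa hAc h hBc with h1 | h1
    · exact hAB h1
    · exact hQc (h1 ▸ hQqa)
  have hCqa : ¬ Inc C qa := by
    intro h
    rcases key A C qa b hAqa hAb h hCb with h1 | h1
    · exact hAC h1
    · exact hQb (h1 ▸ hQqa)
  -- distinctness of the five excluded points Q, A, X, Y, Y'
  have hQX : Q ≠ X := fun h => hQa (h ▸ hXa)
  have hQY : Q ≠ Y := fun h => hQpb (h ▸ hYpb)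
  have hQY' : Q ≠ Y' := fun h => hQpc (h ▸ hY'pc)
  have hAX : A ≠ X := fun h => hAa (h ▸ hXa)
  have hAY : A ≠ Y := fun h => hApb (h ▸ hYpb)
  have hAY' : A ≠ Y' := fun h => hApc (h ▸ hY'pc)
  have hXY : X ≠ Y := by
    intro h
    rcases key X B a pb hXa (h ▸ hYpb) hBa hBpb with h1 | h1
    · exact hBqa (h1 ▸ hXqa)
    · exact hPa (h1 ▸ hPpb)
  have hXY' : X ≠ Y' := by
    intro h
    rcases key X C a pc hXa (h ▸ hY'pc) hCa hCpc with h1 | h1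
    · exact hCqa (h1 ▸ hXqa)
    · exact hPa (h1 ▸ hPpc)
  have hYY' : Y ≠ Y' := by
    intro h
    rcases key Y P pb pc hYpb (h ▸ hY'pc) hPpb hPpc with h1 | h1
    · exact hPqa (h1 ▸ hYqa)
    · rcases key B C pb a hBpb hBa (h1 ▸ hCpc) hCa with h2 | h2
      · exact hBC h2
      · exact hPa (h2 ▸ hPpb)
  -- the set equality
  have hset : Finset.univ.filter (fun z : Pt => Inc z qa ∧ R z ∧ z ≠ P ∧ z ≠ Q ∧
        (∃ l : Ln, LR l ∧ Inc P l ∧ Inc z l))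
      = (Finset.univ.filter (fun p : Pt => Inc p qa)) \ {Q, A, X, Y, Y'} := by
    ext z
    simp only [Finset.mem_filter, Finset.mem_univ, true_and, Finset.mem_sdiff,
      Finset.mem_insert, Finset.mem_singleton]
    constructor
    · rintro ⟨hzqa, hRz, hzP, hzQ, l, hLRl', hPl', hzl'⟩
      obtain ⟨hza, hzb, hzc⟩ := (hR z).1 hRz
      obtain ⟨hAl', hBl', hCl'⟩ := (hLR l).1 hLRl'
      refine ⟨hzqa, ?_⟩
      push_neg
      refine ⟨hzQ, fun h => hzb (h ▸ hAb), fun h => hza (h ▸ hXa), ?_, ?_⟩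
      · intro h
        rcases key z P pb l (h ▸ hYpb) hzl' hPpb hPl' with h1 | h1
        · exact hzP h1
        · exact hBl' (h1 ▸ hBpb)
      · intro h
        rcases key z P pc l (h ▸ hY'pc) hzl' hPpc hPl' with h1 | h1
        · exact hzP h1
        · exact hCl' (h1 ▸ hCpc)
    · rintro ⟨hzqa, hnot⟩
      push_neg at hnot
      obtain ⟨hzQ, hzA, hzX, hzY, hzY'⟩ := hnot
      have hza : ¬ Inc z a := by
        intro h
        rcases key z X a qa h hzqa hXa hXqa with h1 | h1
        · exact hzX h1
        · exact hAa (h1 ▸ hAqa)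
      have hzb : ¬ Inc z b := by
        intro h
        rcases key z A b qa h hzqa hAb hAqa with h1 | h1
        · exact hzA h1
        · exact hQb (h1 ▸ hQqa)
      have hzc : ¬ Inc z c := by
        intro h
        rcases key z A c qa h hzqa hAc hAqa with h1 | h1
        · exact hzA h1
        · exact hQc (h1 ▸ hQqa)
      have hzP : z ≠ P := fun h => hPqa (h ▸ hzqa)
      obtain ⟨l, hPl', hzl'⟩ := hjoin P z (Ne.symm hzP)
      have hlqa : l ≠ qa := fun h => hPqa (h ▸ hPl')
      refine ⟨hzqa, (hR z).2 ⟨hza, hzb, hzc⟩, hzP, hzQ, l, (hLR l).2 ⟨?_, ?_, ?_⟩, hPl', hzl'⟩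
      · intro h
        rcases key A z l qa h hAqa hzl' hzqa with h1 | h1
        · exact hzA h1.symm
        · exact hlqa h1
      · intro h
        rcases key P B l pb hPl' hPpb h hBpb with h1 | h1
        · exact hPB h1
        · apply hzY
          rcases key z Y pb qa (h1 ▸ hzl') hzqa hYpb hYqa with h2 | h2
          · exact h2
          · exact absurd (h2 ▸ hPpb) hPqa
      · intro h
        rcases key P C l pc hPl' hPpc h hCpc with h1 | h1
        · exact hPC h1
        · apply hzY'
          rcases key z Y' pc qa (h1 ▸ hzl') hzqa hY'pc hY'qa with h2 | h2
          · exact h2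
          · exact absurd (h2 ▸ hPpc) hPqa
  rw [hset, Finset.card_sdiff_of_subset ?sub]
  · rw [hldeg qa, card_five hQA hQX hQY hQY' hAX hAY hAY' hXY hXY' hYY']
    omega
  case sub =>
    intro z hz
    simp only [Finset.mem_insert, Finset.mem_singleton] at hz
    simp only [Finset.mem_filter, Finset.mem_univ, true_and]
    rcases hz with h | h | h | h | h <;> subst h <;> assumption

theorem stmt_9 {Pt Ln : Type*} [Fintype Pt] [Fintype Ln] [DecidableEq Pt] (Inc : Pt → Ln → Prop)
    [∀ p l, Decidable (Inc p l)] (n : ℕ) (hn : 5 ≤ n)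
    (hjoin : ∀ p q : Pt, p ≠ q → ∃! l : Ln, Inc p l ∧ Inc q l)
    (hmeet : ∀ l m : Ln, l ≠ m → ∃! p : Pt, Inc p l ∧ Inc p m)
    (hldeg : ∀ l : Ln, (Finset.univ.filter (fun p : Pt => Inc p l)).card = n + 1)
    (hpdeg : ∀ p : Pt, (Finset.univ.filter (fun l : Ln => Inc p l)).card = n + 1)
    (hcardP : Fintype.card Pt = n ^ 2 + n + 1)
    (hcardL : Fintype.card Ln = n ^ 2 + n + 1)
    (A B C : Pt) (lAB lAC lBC : Ln)
    (hAB : Inc A lAB ∧ Inc B lAB) (hAC : Inc A lAC ∧ Inc C lAC)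
    (hBC : Inc B lBC ∧ Inc C lBC)
    (hnc : ¬ ∃ l : Ln, Inc A l ∧ Inc B l ∧ Inc C l)
    (P Q : Pt) (hPQ : P ≠ Q)
    (hP : ¬ Inc P lAB ∧ ¬ Inc P lAC ∧ ¬ Inc P lBC)
    (hQ : ¬ Inc Q lAB ∧ ¬ Inc Q lAC ∧ ¬ Inc Q lBC)
    (hcoll : ∃ l : Ln, (¬ Inc A l ∧ ¬ Inc B l ∧ ¬ Inc C l) ∧ Inc P l ∧ Inc Q l) :
    (Finset.univ.filter (fun z : Pt =>
        (¬ Inc z lAB ∧ ¬ Inc z lAC ∧ ¬ Inc z lBC) ∧ z ≠ P ∧ z ≠ Q ∧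
        (∃ l : Ln, (¬ Inc A l ∧ ¬ Inc B l ∧ ¬ Inc C l) ∧ Inc P l ∧ Inc z l) ∧
        (∃ l : Ln, (¬ Inc A l ∧ ¬ Inc B l ∧ ¬ Inc C l) ∧ Inc Q l ∧ Inc z l))).card
      = (n - 4) ^ 2 + 1 := by
  classical
  obtain ⟨hABA, hABB⟩ := hAB
  obtain ⟨hACA, hACC⟩ := hAC
  obtain ⟨hBCB, hBCC⟩ := hBC
  obtain ⟨hPab, hPac, hPbc⟩ := hP
  obtain ⟨hQab, hQac, hQbc⟩ := hQ
  have key : ∀ (p q : Pt) (l m : Ln), Inc p l → Inc p m → Inc q l → Inc q m →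
      p = q ∨ l = m := by
    intro p q l m hpl hpm hql hqm
    by_cases hpq : p = q
    · exact Or.inl hpq
    · obtain ⟨l0, _, hu⟩ := hjoin p q hpq
      exact Or.inr ((hu l ⟨hpl, hql⟩).trans (hu m ⟨hpm, hqm⟩).symm)
  have hjoin' : ∀ p q : Pt, p ≠ q → ∃ l, Inc p l ∧ Inc q l :=
    fun p q h => (hjoin p q h).exists
  have hmeet' : ∀ l m : Ln, l ≠ m → ∃ p, Inc p l ∧ Inc p m :=
    fun l m h => (hmeet l m h).exists
  -- nondegeneracy
  have hABn : A ≠ B := fun h => hnc ⟨lAC, hACA, h ▸ hACA, hACC⟩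
  have hACn : A ≠ C := fun h => hnc ⟨lAB, hABA, hABB, h ▸ hABA⟩
  have hBCn : B ≠ C := fun h => hnc ⟨lAB, hABA, hABB, h ▸ hABB⟩
  have hAbc : ¬ Inc A lBC := fun h => hnc ⟨lBC, h, hBCB, hBCC⟩
  have hBac : ¬ Inc B lAC := fun h => hnc ⟨lAC, hACA, h, hACC⟩
  have hCab : ¬ Inc C lAB := fun h => hnc ⟨lAB, hABA, hABB, h⟩
  have hPA : P ≠ A := fun h => hPab (h ▸ hABA)
  have hPB : P ≠ B := fun h => hPab (h ▸ hABB)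
  have hPC : P ≠ C := fun h => hPac (h ▸ hACC)
  have hQA : Q ≠ A := fun h => hQab (h ▸ hABA)
  have hQB : Q ≠ B := fun h => hQab (h ▸ hABB)
  have hQC : Q ≠ C := fun h => hQac (h ▸ hACC)
  obtain ⟨L, ⟨hAL, hBL, hCL⟩, hPL, hQL⟩ := hcoll
  -- named subsets
  set Son : Finset Pt := Finset.univ.filter (fun z : Pt =>
      Inc z L ∧ (¬ Inc z lAB ∧ ¬ Inc z lAC ∧ ¬ Inc z lBC) ∧ z ≠ P ∧ z ≠ Q) with hSon
  set N1 : Finset Pt := Finset.univ.filter (fun z : Pt =>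
      ¬ Inc z L ∧ (¬ Inc z lAB ∧ ¬ Inc z lAC ∧ ¬ Inc z lBC) ∧ z ≠ P ∧ z ≠ Q ∧
      (∃ l : Ln, (¬ Inc A l ∧ ¬ Inc B l ∧ ¬ Inc C l) ∧ Inc P l ∧ Inc z l)) with hN1
  set Soff : Finset Pt := N1.filter (fun z : Pt =>
      (∃ l : Ln, (¬ Inc A l ∧ ¬ Inc B l ∧ ¬ Inc C l) ∧ Inc Q l ∧ Inc z l)) with hSoff
  set N2 : Finset Pt := N1.filter (fun z : Pt =>
      ¬ (∃ l : Ln, (¬ Inc A l ∧ ¬ Inc B l ∧ ¬ Inc C l) ∧ Inc Q l ∧ Inc z l)) with hN2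
  -- splitting of the goal set
  have hsplit : (Finset.univ.filter (fun z : Pt =>
        (¬ Inc z lAB ∧ ¬ Inc z lAC ∧ ¬ Inc z lBC) ∧ z ≠ P ∧ z ≠ Q ∧
        (∃ l : Ln, (¬ Inc A l ∧ ¬ Inc B l ∧ ¬ Inc C l) ∧ Inc P l ∧ Inc z l) ∧
        (∃ l : Ln, (¬ Inc A l ∧ ¬ Inc B l ∧ ¬ Inc C l) ∧ Inc Q l ∧ Inc z l)))
      = Son ∪ Soff := by
    ext z
    simp only [hSon, hSoff, hN1, Finset.mem_filter, Finset.mem_union, Finset.mem_univ,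
      true_and]
    constructor
    · rintro ⟨hrem, hzP, hzQ, hPz, hQz⟩
      by_cases hzL : Inc z L
      · exact Or.inl ⟨hzL, hrem, hzP, hzQ⟩
      · exact Or.inr ⟨⟨hzL, hrem, hzP, hzQ, hPz⟩, hQz⟩
    · rintro (⟨hzL, hrem, hzP, hzQ⟩ | ⟨⟨hzL, hrem, hzP, hzQ, hPz⟩, hQz⟩)
      · exact ⟨hrem, hzP, hzQ, ⟨L, ⟨hAL, hBL, hCL⟩, hPL, hzL⟩,
          ⟨L, ⟨hAL, hBL, hCL⟩, hQL, hzL⟩⟩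
      · exact ⟨hrem, hzP, hzQ, hPz, hQz⟩
  have hdisj : Disjoint Son Soff := by
    rw [Finset.disjoint_left]
    intro z h1 h2
    rw [hSon, Finset.mem_filter] at h1
    rw [hSoff, Finset.mem_filter, hN1, Finset.mem_filter] at h2
    exact h2.1.2.1 h1.2.1
  -- count of Son
  have hLab : L ≠ lAB := fun h => hAL (h ▸ hABA)
  have hLac : L ≠ lAC := fun h => hAL (h ▸ hACA)
  have hLbc : L ≠ lBC := fun h => hBL (h ▸ hBCB)
  obtain ⟨Z1, hZ1L, hZ1⟩ := hmeet' L lAB hLab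
  obtain ⟨Z2, hZ2L, hZ2⟩ := hmeet' L lAC hLac
  obtain ⟨Z3, hZ3L, hZ3⟩ := hmeet' L lBC hLbc
  have hlABlAC : lAB ≠ lAC := fun h => hCab (h ▸ hACC)
  have hlABlBC : lAB ≠ lBC := fun h => hAbc (h ▸ hABA)
  have hlAClBC : lAC ≠ lBC := fun h => hAbc (h ▸ hACA)
  have hSonCard : Son.card = n - 4 := by
    have hseteq : Son = (Finset.univ.filter (fun p : Pt => Inc p L)) \ {P, Q, Z1, Z2, Z3} := by
      rw [hSon]
      ext z
      simp only [Finset.mem_filter, Finset.mem_univ, true_and, Finset.mem_sdiff,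
        Finset.mem_insert, Finset.mem_singleton]
      constructor
      · rintro ⟨hzL, ⟨hzab, hzac, hzbc⟩, hzP, hzQ⟩
        refine ⟨hzL, ?_⟩
        push_neg
        exact ⟨hzP, hzQ, fun h => hzab (h ▸ hZ1), fun h => hzac (h ▸ hZ2),
          fun h => hzbc (h ▸ hZ3)⟩
      · rintro ⟨hzL, hnot⟩
        push_neg at hnot
        obtain ⟨hzP, hzQ, hz1, hz2, hz3⟩ := hnot
        refine ⟨hzL, ⟨?_, ?_, ?_⟩, hzP, hzQ⟩
        · intro h
          rcases key z Z1 lAB L h hzL hZ1 hZ1L with h1 | h1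
          · exact hz1 h1
          · exact hLab h1.symm
        · intro h
          rcases key z Z2 lAC L h hzL hZ2 hZ2L with h1 | h1
          · exact hz2 h1
          · exact hLac h1.symm
        · intro h
          rcases key z Z3 lBC L h hzL hZ3 hZ3L with h1 | h1
          · exact hz3 h1
          · exact hLbc h1.symm
    have hPZ1 : P ≠ Z1 := fun h => hPab (h ▸ hZ1)
    have hPZ2 : P ≠ Z2 := fun h => hPac (h ▸ hZ2)
    have hPZ3 : P ≠ Z3 := fun h => hPbc (h ▸ hZ3)
    have hQZ1 : Q ≠ Z1 := fun h => hQab (h ▸ hZ1)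
    have hQZ2 : Q ≠ Z2 := fun h => hQac (h ▸ hZ2)
    have hQZ3 : Q ≠ Z3 := fun h => hQbc (h ▸ hZ3)
    have hZ12 : Z1 ≠ Z2 := by
      intro h
      rcases key Z1 A lAB lAC hZ1 (h ▸ hZ2) hABA hACA with h1 | h1
      · exact hAL (h1 ▸ hZ1L)
      · exact hlABlAC h1
    have hZ13 : Z1 ≠ Z3 := by
      intro h
      rcases key Z1 B lAB lBC hZ1 (h ▸ hZ3) hABB hBCB with h1 | h1
      · exact hBL (h1 ▸ hZ1L)
      · exact hlABlBC h1
    have hZ23 : Z2 ≠ Z3 := by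
      intro h
      rcases key Z2 C lAC lBC hZ2 (h ▸ hZ3) hACC hBCC with h1 | h1
      · exact hCL (h1 ▸ hZ2L)
      · exact hlAClBC h1
    rw [hseteq, Finset.card_sdiff_of_subset ?sub]
    · rw [hldeg L, card_five hPQ hPZ1 hPZ2 hPZ3 hQZ1 hQZ2 hQZ3 hZ12 hZ13 hZ23]
      omega
    case sub =>
      intro z hz
      simp only [Finset.mem_insert, Finset.mem_singleton] at hz
      simp only [Finset.mem_filter, Finset.mem_univ, true_and]
      rcases hz with h | h | h | h | h <;> subst h <;> assumption
  -- count of N1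
  obtain ⟨pa, hPpa, hApa⟩ := hjoin' P A hPA
  obtain ⟨pb, hPpb, hBpb⟩ := hjoin' P B hPB
  obtain ⟨pc, hPpc, hCpc⟩ := hjoin' P C hPC
  set M : Finset Ln := Finset.univ.filter (fun m : Ln =>
      Inc P m ∧ (¬ Inc A m ∧ ¬ Inc B m ∧ ¬ Inc C m) ∧ m ≠ L) with hM
  have hLpa : L ≠ pa := fun h => hAL (h ▸ hApa)
  have hLpb : L ≠ pb := fun h => hBL (h ▸ hBpb)
  have hLpc : L ≠ pc := fun h => hCL (h ▸ hCpc)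
  have hpapb : pa ≠ pb := by
    intro h
    rcases key A B pa lAB hApa hABA (h ▸ hBpb) hABB with h1 | h1
    · exact hABn h1
    · exact hPab (h1 ▸ hPpa)
  have hpapc : pa ≠ pc := by
    intro h
    rcases key A C pa lAC hApa hACA (h ▸ hCpc) hACC with h1 | h1
    · exact hACn h1
    · exact hPac (h1 ▸ hPpa)
  have hpbpc : pb ≠ pc := by
    intro h
    rcases key B C pb lBC hBpb hBCB (h ▸ hCpc) hBCC with h1 | h1
    · exact hBCn h1
    · exact hPbc (h1 ▸ hPpb)
  have hMcard : M.card = n - 3 := by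
    have hseteq : M = (Finset.univ.filter (fun m : Ln => Inc P m)) \ {L, pa, pb, pc} := by
      rw [hM]
      ext m
      simp only [Finset.mem_filter, Finset.mem_univ, true_and, Finset.mem_sdiff,
        Finset.mem_insert, Finset.mem_singleton]
      constructor
      · rintro ⟨hPm, ⟨hAm, hBm, hCm⟩, hmL⟩
        refine ⟨hPm, ?_⟩
        push_neg
        exact ⟨hmL, fun h => hAm (h ▸ hApa), fun h => hBm (h ▸ hBpb),
          fun h => hCm (h ▸ hCpc)⟩
      · rintro ⟨hPm, hnot⟩
        push_neg at hnot
        obtain ⟨hmL, hma, hmb, hmc⟩ := hnot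
        refine ⟨hPm, ⟨?_, ?_, ?_⟩, hmL⟩
        · intro h
          rcases key P A m pa hPm hPpa h hApa with h1 | h1
          · exact hPA h1
          · exact hma h1
        · intro h
          rcases key P B m pb hPm hPpb h hBpb with h1 | h1
          · exact hPB h1
          · exact hmb h1
        · intro h
          rcases key P C m pc hPm hPpc h hCpc with h1 | h1
          · exact hPC h1
          · exact hmc h1
    rw [hseteq, Finset.card_sdiff_of_subset ?sub]
    · rw [hpdeg P, card_four hLpa hLpb hLpc hpapb hpapc hpbpc]
      omega
    case sub =>
      intro m hm
      simp only [Finset.mem_insert, Finset.mem_singleton] at hm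
      simp only [Finset.mem_filter, Finset.mem_univ, true_and]
      rcases hm with h | h | h | h <;> subst h <;> assumption
  have hbiU : N1 = M.biUnion (fun m => Finset.univ.filter (fun z : Pt =>
      Inc z m ∧ (¬ Inc z lAB ∧ ¬ Inc z lAC ∧ ¬ Inc z lBC) ∧ z ≠ P)) := by
    rw [hN1, hM]
    ext z
    simp only [Finset.mem_filter, Finset.mem_univ, true_and, Finset.mem_biUnion]
    constructor
    · rintro ⟨hzL, hrem, hzP, hzQ, ⟨l, hlrem, hPl', hzl'⟩⟩
      exact ⟨l, ⟨hPl', hlrem, fun h => hzL (h ▸ hzl')⟩, hzl', hrem, hzP⟩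
    · rintro ⟨m, ⟨hPm, hmrem, hmL⟩, hzm, hrem, hzP⟩
      refine ⟨?_, hrem, hzP, ?_, ⟨m, hmrem, hPm, hzm⟩⟩
      · intro h
        rcases key z P L m h hzm hPL hPm with h1 | h1
        · exact hzP h1
        · exact hmL h1.symm
      · intro h
        rcases key P Q m L hPm hPL (h ▸ hzm) hQL with h1 | h1
        · exact hPQ h1
        · exact hmL h1
  have hTcard : ∀ m ∈ M, (Finset.univ.filter (fun z : Pt =>
      Inc z m ∧ (¬ Inc z lAB ∧ ¬ Inc z lAC ∧ ¬ Inc z lBC) ∧ z ≠ P)).card = n - 3 := by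
    intro m hm
    rw [hM, Finset.mem_filter] at hm
    obtain ⟨_, hPm, ⟨hAm, hBm, hCm⟩, hmL⟩ := hm
    have hmab : m ≠ lAB := fun h => hAm (h ▸ hABA)
    have hmac : m ≠ lAC := fun h => hAm (h ▸ hACA)
    have hmbc : m ≠ lBC := fun h => hBm (h ▸ hBCB)
    obtain ⟨W1, hW1m, hW1⟩ := hmeet' m lAB hmab
    obtain ⟨W2, hW2m, hW2⟩ := hmeet' m lAC hmac
    obtain ⟨W3, hW3m, hW3⟩ := hmeet' m lBC hmbc
    have hPW1 : P ≠ W1 := fun h => hPab (h ▸ hW1)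
    have hPW2 : P ≠ W2 := fun h => hPac (h ▸ hW2)
    have hPW3 : P ≠ W3 := fun h => hPbc (h ▸ hW3)
    have hW12 : W1 ≠ W2 := by
      intro h
      rcases key W1 A lAB lAC hW1 (h ▸ hW2) hABA hACA with h1 | h1
      · exact hAm (h1 ▸ hW1m)
      · exact hlABlAC h1
    have hW13 : W1 ≠ W3 := by
      intro h
      rcases key W1 B lAB lBC hW1 (h ▸ hW3) hABB hBCB with h1 | h1
      · exact hBm (h1 ▸ hW1m)
      · exact hlABlBC h1
    have hW23 : W2 ≠ W3 := by
      intro h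
      rcases key W2 C lAC lBC hW2 (h ▸ hW3) hACC hBCC with h1 | h1
      · exact hCm (h1 ▸ hW2m)
      · exact hlAClBC h1
    have hseteq : Finset.univ.filter (fun z : Pt =>
        Inc z m ∧ (¬ Inc z lAB ∧ ¬ Inc z lAC ∧ ¬ Inc z lBC) ∧ z ≠ P)
        = (Finset.univ.filter (fun p : Pt => Inc p m)) \ {P, W1, W2, W3} := by
      ext z
      simp only [Finset.mem_filter, Finset.mem_univ, true_and, Finset.mem_sdiff,
        Finset.mem_insert, Finset.mem_singleton]
      constructor
      · rintro ⟨hzm, ⟨hzab, hzac, hzbc⟩, hzP⟩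
        refine ⟨hzm, ?_⟩
        push_neg
        exact ⟨hzP, fun h => hzab (h ▸ hW1), fun h => hzac (h ▸ hW2),
          fun h => hzbc (h ▸ hW3)⟩
      · rintro ⟨hzm, hnot⟩
        push_neg at hnot
        obtain ⟨hzP, hz1, hz2, hz3⟩ := hnot
        refine ⟨hzm, ⟨?_, ?_, ?_⟩, hzP⟩
        · intro h
          rcases key z W1 lAB m h hzm hW1 hW1m with h1 | h1
          · exact hz1 h1
          · exact hmab h1.symm
        · intro h
          rcases key z W2 lAC m h hzm hW2 hW2m with h1 | h1
          · exact hz2 h1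
          · exact hmac h1.symm
        · intro h
          rcases key z W3 lBC m h hzm hW3 hW3m with h1 | h1
          · exact hz3 h1
          · exact hmbc h1.symm
    rw [hseteq, Finset.card_sdiff_of_subset ?sub]
    · rw [hldeg m, card_four hPW1 hPW2 hPW3 hW12 hW13 hW23]
      omega
    case sub =>
      intro z hz
      simp only [Finset.mem_insert, Finset.mem_singleton] at hz
      simp only [Finset.mem_filter, Finset.mem_univ, true_and]
      rcases hz with h | h | h | h <;> subst h <;> assumption
  have hN1card : N1.card = (n - 3) * (n - 3) := by
    rw [hbiU, Finset.card_biUnion ?dsj]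
    · rw [Finset.sum_congr rfl hTcard, Finset.sum_const, hMcard, smul_eq_mul]
    case dsj =>
      intro m hm m' hm' hmm'
      rw [hM, Finset.mem_coe, Finset.mem_filter] at hm hm'
      rw [Function.onFun, Finset.disjoint_left]
      intro z hz hz'
      simp only [Finset.mem_filter, Finset.mem_univ, true_and] at hz hz'
      rcases key z P m m' hz.1 hz'.1 hm.2.1 hm'.2.1 with h1 | h1
      · exact hz.2.2 h1
      · exact hmm' h1
  -- count of N2
  obtain ⟨qa, hQqa, hAqa⟩ := hjoin' Q A hQA
  obtain ⟨qb, hQqb, hBqb⟩ := hjoin' Q B hQB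
  obtain ⟨qc, hQqc, hCqc⟩ := hjoin' Q C hQC
  have hLqa : L ≠ qa := fun h => hAL (h ▸ hAqa)
  have hLqb : L ≠ qb := fun h => hBL (h ▸ hBqb)
  have hLqc : L ≠ qc := fun h => hCL (h ▸ hCqc)
  have hqaqb : qa ≠ qb := by
    intro h
    rcases key A B qa lAB hAqa hABA (h ▸ hBqb) hABB with h1 | h1
    · exact hABn h1
    · exact hQab (h1 ▸ hQqa)
  have hqaqc : qa ≠ qc := by
    intro h
    rcases key A C qa lAC hAqa hACA (h ▸ hCqc) hACC with h1 | h1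
    · exact hACn h1
    · exact hQac (h1 ▸ hQqa)
  have hqbqc : qb ≠ qc := by
    intro h
    rcases key B C qb lBC hBqb hBCB (h ▸ hCqc) hBCC with h1 | h1
    · exact hBCn h1
    · exact hQbc (h1 ▸ hQqb)
  set BA : Finset Pt := Finset.univ.filter (fun z : Pt =>
      Inc z qa ∧ (¬ Inc z lAB ∧ ¬ Inc z lAC ∧ ¬ Inc z lBC) ∧ z ≠ P ∧ z ≠ Q ∧
      (∃ l : Ln, (¬ Inc A l ∧ ¬ Inc B l ∧ ¬ Inc C l) ∧ Inc P l ∧ Inc z l)) with hBA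
  set BB : Finset Pt := Finset.univ.filter (fun z : Pt =>
      Inc z qb ∧ (¬ Inc z lAB ∧ ¬ Inc z lAC ∧ ¬ Inc z lBC) ∧ z ≠ P ∧ z ≠ Q ∧
      (∃ l : Ln, (¬ Inc A l ∧ ¬ Inc B l ∧ ¬ Inc C l) ∧ Inc P l ∧ Inc z l)) with hBB
  set BC : Finset Pt := Finset.univ.filter (fun z : Pt =>
      Inc z qc ∧ (¬ Inc z lAB ∧ ¬ Inc z lAC ∧ ¬ Inc z lBC) ∧ z ≠ P ∧ z ≠ Q ∧
      (∃ l : Ln, (¬ Inc A l ∧ ¬ Inc B l ∧ ¬ Inc C l) ∧ Inc P l ∧ Inc z l)) with hBCs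
  have hN2eq : N2 = BA ∪ (BB ∪ BC) := by
    rw [hN2, hN1, hBA, hBB, hBCs]
    ext z
    simp only [Finset.mem_filter, Finset.mem_univ, true_and, Finset.mem_union]
    constructor
    · rintro ⟨⟨hzL, hrem, hzP, hzQ, hPz⟩, hnQz⟩
      obtain ⟨l0, hQl0, hzl0⟩ := hjoin' Q z (Ne.symm hzQ)
      have hbad : ¬ (¬ Inc A l0 ∧ ¬ Inc B l0 ∧ ¬ Inc C l0) :=
        fun h => hnQz ⟨l0, h, hQl0, hzl0⟩
      by_cases hA0 : Inc A l0
      · have hl0 : l0 = qa := by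
          rcases key Q A l0 qa hQl0 hQqa hA0 hAqa with h1 | h1
          · exact absurd h1 hQA
          · exact h1
        exact Or.inl ⟨hl0 ▸ hzl0, hrem, hzP, hzQ, hPz⟩
      · by_cases hB0 : Inc B l0
        · have hl0 : l0 = qb := by
            rcases key Q B l0 qb hQl0 hQqb hB0 hBqb with h1 | h1
            · exact absurd h1 hQB
            · exact h1
          exact Or.inr (Or.inl ⟨hl0 ▸ hzl0, hrem, hzP, hzQ, hPz⟩)
        · by_cases hC0 : Inc C l0
          · have hl0 : l0 = qc := by
              rcases key Q C l0 qc hQl0 hQqc hC0 hCqc with h1 | h1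
              · exact absurd h1 hQC
              · exact h1
            exact Or.inr (Or.inr ⟨hl0 ▸ hzl0, hrem, hzP, hzQ, hPz⟩)
          · exact absurd ⟨hA0, hB0, hC0⟩ hbad
    · rintro (⟨hzq, hrem, hzP, hzQ, hPz⟩ | ⟨hzq, hrem, hzP, hzQ, hPz⟩ |
        ⟨hzq, hrem, hzP, hzQ, hPz⟩)
      · refine ⟨⟨?_, hrem, hzP, hzQ, hPz⟩, ?_⟩
        · intro h
          rcases key z Q L qa h hzq hQL hQqa with h1 | h1
          · exact hzQ h1
          · exact hLqa h1
        · rintro ⟨l, ⟨hA', hB', hC'⟩, hQl', hzl'⟩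
          rcases key Q z l qa hQl' hQqa hzl' hzq with h1 | h1
          · exact hzQ h1.symm
          · exact hA' (h1 ▸ hAqa)
      · refine ⟨⟨?_, hrem, hzP, hzQ, hPz⟩, ?_⟩
        · intro h
          rcases key z Q L qb h hzq hQL hQqb with h1 | h1
          · exact hzQ h1
          · exact hLqb h1
        · rintro ⟨l, ⟨hA', hB', hC'⟩, hQl', hzl'⟩
          rcases key Q z l qb hQl' hQqb hzl' hzq with h1 | h1
          · exact hzQ h1.symm
          · exact hB' (h1 ▸ hBqb)
      · refine ⟨⟨?_, hrem, hzP, hzQ, hPz⟩, ?_⟩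
        · intro h
          rcases key z Q L qc h hzq hQL hQqc with h1 | h1
          · exact hzQ h1
          · exact hLqc h1
        · rintro ⟨l, ⟨hA', hB', hC'⟩, hQl', hzl'⟩
          rcases key Q z l qc hQl' hQqc hzl' hzq with h1 | h1
          · exact hzQ h1.symm
          · exact hC' (h1 ▸ hCqc)
  have hdisjBBC : Disjoint BB BC := by
    rw [Finset.disjoint_left]
    intro z h1 h2
    rw [hBB, Finset.mem_filter] at h1
    rw [hBCs, Finset.mem_filter] at h2
    rcases key z Q qb qc h1.2.1 h2.2.1 hQqb hQqc with h3 | h3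
    · exact h1.2.2.2.2.1 h3
    · exact hqbqc h3
  have hdisjA : Disjoint BA (BB ∪ BC) := by
    rw [Finset.disjoint_left]
    intro z h1 h2
    rw [hBA, Finset.mem_filter] at h1
    rw [Finset.mem_union] at h2
    rcases h2 with h2 | h2
    · rw [hBB, Finset.mem_filter] at h2
      rcases key z Q qa qb h1.2.1 h2.2.1 hQqa hQqb with h3 | h3
      · exact h1.2.2.2.2.1 h3
      · exact hqaqb h3
    · rw [hBCs, Finset.mem_filter] at h2
      rcases key z Q qa qc h1.2.1 h2.2.1 hQqa hQqc with h3 | h3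
      · exact h1.2.2.2.2.1 h3
      · exact hqaqc h3
  have hRP' : (¬ Inc P lAB ∧ ¬ Inc P lAC ∧ ¬ Inc P lBC) := ⟨hPab, hPac, hPbc⟩
  have hRQ' : (¬ Inc Q lAB ∧ ¬ Inc Q lAC ∧ ¬ Inc Q lBC) := ⟨hQab, hQac, hQbc⟩
  have hLRL' : (¬ Inc A L ∧ ¬ Inc B L ∧ ¬ Inc C L) := ⟨hAL, hBL, hCL⟩
  have hBAcard : BA.card = n - 4 := by
    rw [hBA]
    exact badline_count Inc n hn key hjoin' hmeet' hldeg
      (fun z : Pt => ¬ Inc z lAB ∧ ¬ Inc z lAC ∧ ¬ Inc z lBC)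
      (fun l : Ln => ¬ Inc A l ∧ ¬ Inc B l ∧ ¬ Inc C l)
      A B C lBC lAC lAB hBCB hBCC hACA hACC hABA hABB
      (fun z => by tauto) (fun l => Iff.rfl)
      hAbc hBac hCab P Q hPQ hRP' hRQ' L hLRL' hPL hQL qa hQqa hAqa
  have hBBcard : BB.card = n - 4 := by
    rw [hBB]
    exact badline_count Inc n hn key hjoin' hmeet' hldeg
      (fun z : Pt => ¬ Inc z lAB ∧ ¬ Inc z lAC ∧ ¬ Inc z lBC)
      (fun l : Ln => ¬ Inc A l ∧ ¬ Inc B l ∧ ¬ Inc C l)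
      B A C lAC lBC lAB hACA hACC hBCB hBCC hABB hABA
      (fun z => by tauto) (fun l => by tauto)
      hBac hAbc hCab P Q hPQ hRP' hRQ' L hLRL' hPL hQL qb hQqb hBqb
  have hBCcard : BC.card = n - 4 := by
    rw [hBCs]
    exact badline_count Inc n hn key hjoin' hmeet' hldeg
      (fun z : Pt => ¬ Inc z lAB ∧ ¬ Inc z lAC ∧ ¬ Inc z lBC)
      (fun l : Ln => ¬ Inc A l ∧ ¬ Inc B l ∧ ¬ Inc C l)
      C A B lAB lBC lAC hABA hABB hBCC hBCB hACC hACA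
      (fun z => by tauto) (fun l => by tauto)
      hCab hAbc hBac P Q hPQ hRP' hRQ' L hLRL' hPL hQL qc hQqc hCqc
  have hN2card : N2.card = (n - 4) + ((n - 4) + (n - 4)) := by
    rw [hN2eq, Finset.card_union_of_disjoint hdisjA, Finset.card_union_of_disjoint hdisjBBC,
      hBAcard, hBBcard, hBCcard]
  -- assembling
  have h1 : (Finset.univ.filter (fun z : Pt =>
        (¬ Inc z lAB ∧ ¬ Inc z lAC ∧ ¬ Inc z lBC) ∧ z ≠ P ∧ z ≠ Q ∧
        (∃ l : Ln, (¬ Inc A l ∧ ¬ Inc B l ∧ ¬ Inc C l) ∧ Inc P l ∧ Inc z l) ∧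
        (∃ l : Ln, (¬ Inc A l ∧ ¬ Inc B l ∧ ¬ Inc C l) ∧ Inc Q l ∧ Inc z l))).card
      = Son.card + Soff.card := by
    rw [hsplit, Finset.card_union_of_disjoint hdisj]
  have h2 : Soff.card + N2.card = N1.card := by
    rw [hSoff, hN2]
    exact Finset.card_filter_add_card_filter_not _
  rw [h1, hSonCard]
  rw [hN2card, hN1card] at h2
  obtain ⟨m, rfl⟩ : ∃ m, n = m + 5 := ⟨n - 5, by omega⟩
  have e1 : m + 5 - 4 = m + 1 := by omega
  have e2 : m + 5 - 3 = m + 2 := by omega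
  rw [e1, e2] at h2
  rw [e1]
  have e3 : (m + 2) * (m + 2) = m * m + 4 * m + 4 := by ring
  have e4 : (m + 1) ^ 2 = m * m + 2 * m + 1 := by ring
  rw [e3] at h2
  rw [e4]
  omega
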